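/- arXiv:2207.12734 — 2 statements merged into one kernel-verified Lean document; each statement's English description precedes it below -/
import Mathlib

section
/- Let N ≥ 1 and let f : ℝ_+ → ℝ be piecewise continuous with jumps only at the points k/N for integers k ≥ 1. Let (α_k)_{k≥0} be real numbers and define g(t) = Σ_{k=0}^{⌊Nt⌋−1} α_k (with the empty sum equal to 0), F(t) = ∫_0^t f(s) ds, and ψ = F + g. Then for all t ≥ 0, ψ(t)^2 = 2 ∫_0^t f(s) ψ(s) ds + Σ_{k=0}^{⌊Nt⌋−1} α_k² + 2 Σ_{k=0}^{⌊Nt⌋−1} ψ((k+1)/N⁻) α_k, where ψ(s⁻) denotes the left limit of ψ at s. -/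
open MeasureTheory Filter Set

section Aux

variable (N : ℕ) (f : ℝ → ℝ)

/-- Continuity of the primitive on `[0, M]`. -/
lemma aux_F_contOn (F : ℝ → ℝ) (hF : ∀ t, F t = ∫ s in (0:ℝ)..t, f s)
    (M : ℝ) (hM : 0 ≤ M) (hint : IntervalIntegrable f volume 0 M) :
    ContinuousOn F (Set.Icc 0 M) := by
  have h := intervalIntegral.continuousOn_primitive_interval' hint
      (Set.left_mem_uIcc (a := (0:ℝ)) (b := M))
  rw [Set.uIcc_of_le hM] at h
  exact h.congr fun x _ => hF x

lemma aux_F_contAt (F : ℝ → ℝ) (hF : ∀ t, F t = ∫ s in (0:ℝ)..t, f s)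
    (hf_int : ∀ t : ℝ, 0 ≤ t → IntervalIntegrable f volume 0 t)
    (x : ℝ) (hx : 0 < x) : ContinuousAt F x := by
  have h := aux_F_contOn f F hF (x + 1) (by linarith) (hf_int (x+1) (by linarith))
  exact h.continuousAt (Icc_mem_nhds hx (by linarith))

end Aux

section Aux2

lemma aux_ftc (f F : ℝ → ℝ) (hF : ∀ t, F t = ∫ s in (0:ℝ)..t, f s)
    (hf_int : ∀ t : ℝ, 0 ≤ t → IntervalIntegrable f volume 0 t)
    (a b c : ℝ) (h0a : 0 ≤ a) (hab : a ≤ b)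
    (hcont : ContinuousOn f (Set.Ioo a b)) :
    (F b + c) ^ 2 - (F a + c) ^ 2 = 2 * ∫ s in a..b, f s * (F s + c) := by
  have h0b : (0:ℝ) ≤ b := le_trans h0a hab
  have hFc : ContinuousOn F (Set.Icc 0 b) := aux_F_contOn f F hF b h0b (hf_int b h0b)
  have hderivF : ∀ x ∈ Set.Ioo a b, HasDerivAt F (f x) x := by
    intro x hx
    have hx0 : 0 ≤ x := le_trans h0a hx.1.le
    have hmeas : StronglyMeasurableAtFilter f (nhds x) volume :=
      hcont.stronglyMeasurableAtFilter isOpen_Ioo x hx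
    have hca : ContinuousAt f x := hcont.continuousAt (isOpen_Ioo.mem_nhds hx)
    have h := intervalIntegral.integral_hasDerivAt_right (hf_int x hx0) hmeas hca
    have hFeq : F = fun u => ∫ s in (0:ℝ)..u, f s := funext hF
    rw [hFeq]; exact h
  have key := intervalIntegral.integral_eq_sub_of_hasDeriv_right_of_le hab
    (f := fun u => (F u + c) ^ 2) (f' := fun s => 2 * (f s * (F s + c)))
    (((hFc.mono (Set.Icc_subset_Icc h0a le_rfl)).add continuousOn_const).pow 2)
    (by
      intro x hx
      have h := ((hderivF x hx).add_const c).fun_pow 2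
      have h2 : HasDerivAt (fun u => (F u + c) ^ 2) (2 * (f x * (F x + c))) x := by
        exact h.congr_deriv (by rw [show (2:ℕ) - 1 = 1 from rfl]; push_cast; ring)
      exact h2.hasDerivWithinAt)
    (by
      have hI : IntervalIntegrable f volume a b := by
        refine (hf_int b h0b).mono_set ?_
        rw [Set.uIcc_of_le hab, Set.uIcc_of_le h0b]
        exact Set.Icc_subset_Icc h0a le_rfl
      have := (hI.mul_continuousOn (g := fun s => F s + c)
        (by
          rw [Set.uIcc_of_le hab]
          exact (hFc.mono (Set.Icc_subset_Icc h0a le_rfl)).add continuousOn_const))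
      exact this.const_mul 2)
  rw [← key, intervalIntegral.integral_const_mul]

end Aux2

/-- Discrete Itô-type formula (Lemma B.3 of the paper): if `f : ℝ₊ → ℝ` is piecewise
continuous with jumps only at the points `k/N`, `g(t) = Σ_{k<⌊Nt⌋} α_k` is the associated
pure-jump step function, `F(t) = ∫_0^t f`, and `ψ = F + g`, then for all `t ≥ 0`,
`ψ(t)² = 2∫_0^t f ψ + Σ_{k<⌊Nt⌋} α_k² + 2 Σ_{k<⌊Nt⌋} ψm((k+1)/N⁻) α_k`. -/
theorem discrete_ito_formula (N : ℕ) (hN : 1 ≤ N) (f : ℝ → ℝ) (α : ℕ → ℝ)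
    (hf_int : ∀ t : ℝ, 0 ≤ t → IntervalIntegrable f MeasureTheory.volume 0 t)
    (hf_cont : ∀ k : ℕ, ContinuousOn f (Set.Ico ((k : ℝ) / N) (((k : ℝ) + 1) / N)))
    (g F ψ : ℝ → ℝ)
    (hg : ∀ t, g t = ∑ k ∈ Finset.range ⌊(N : ℝ) * t⌋₊, α k)
    (hF : ∀ t, F t = ∫ s in (0:ℝ)..t, f s)
    (hψ : ∀ t, ψ t = F t + g t)
    (ψm : ℕ → ℝ)
    (hψm : ∀ k : ℕ, Tendsto ψ
      (nhdsWithin (((k : ℝ) + 1) / N) (Set.Iio (((k : ℝ) + 1) / N))) (nhds (ψm k))) :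
    ∀ t : ℝ, 0 ≤ t →
      ψ t ^ 2 = 2 * (∫ s in (0:ℝ)..t, f s * ψ s) +
        (∑ k ∈ Finset.range ⌊(N : ℝ) * t⌋₊, (α k) ^ 2) +
        2 * ∑ k ∈ Finset.range ⌊(N : ℝ) * t⌋₊, ψm k * α k := by
  have hN0 : (0:ℝ) < N := by exact_mod_cast hN
  -- grid points
  set T : ℕ → ℝ := fun k => (k : ℝ) / N with hT
  have hTsucc : ∀ k : ℕ, T (k + 1) = ((k : ℝ) + 1) / N := by
    intro k; simp only [hT]; push_cast; ring_nf
  have hT0 : T 0 = 0 := by simp [hT]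
  have hTnonneg : ∀ k, 0 ≤ T k := fun k => by positivity
  have hTlt : ∀ k : ℕ, T k < T (k + 1) := by
    intro k
    simp only [hT]
    gcongr
    exact_mod_cast Nat.lt_succ_self k
  -- the accumulated jumps
  set C : ℕ → ℝ := fun k => ∑ j ∈ Finset.range k, α j with hC
  have hfloor : ∀ (k : ℕ) (s : ℝ), s ∈ Set.Ico (T k) (T (k+1)) → ⌊(N : ℝ) * s⌋₊ = k := by
    intro k s hs
    have hs0 : 0 ≤ s := le_trans (hTnonneg k) hs.1
    rw [Nat.floor_eq_iff (by positivity)]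
    constructor
    · have := hs.1
      simp only [hT] at this
      rw [div_le_iff₀ hN0] at this
      linarith [this]
    · have := hs.2
      rw [hTsucc k] at this
      rw [lt_div_iff₀ hN0] at this
      linarith [this]
  have hψ_eq : ∀ (k : ℕ) (s : ℝ), s ∈ Set.Ico (T k) (T (k+1)) → ψ s = F s + C k := by
    intro k s hs
    rw [hψ s, hg s, hfloor k s hs]
  -- identify the left limits
  have hψm_val : ∀ k : ℕ, ψm k = F (T (k+1)) + C k := by
    intro k
    have hpos : 0 < T (k+1) := lt_of_le_of_lt (hTnonneg k) (hTlt k)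
    have hmem : Set.Ioo (T k) (T (k+1)) ∈ nhdsWithin (T (k+1)) (Set.Iio (T (k+1))) :=
      Ioo_mem_nhdsLT_of_mem ⟨hTlt k, le_rfl⟩
    have heq : ψ =ᶠ[nhdsWithin (T (k+1)) (Set.Iio (T (k+1)))] (fun s => F s + C k) :=
      eventually_of_mem hmem (fun s hs => hψ_eq k s ⟨hs.1.le, hs.2⟩)
    have hFt : Tendsto F (nhdsWithin (T (k+1)) (Set.Iio (T (k+1)))) (nhds (F (T (k+1)))) :=
      ((aux_F_contAt f F hF hf_int _ hpos).tendsto).mono_left nhdsWithin_le_nhds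
    have hcand : Tendsto ψ (nhdsWithin (T (k+1)) (Set.Iio (T (k+1))))
        (nhds (F (T (k+1)) + C k)) := (hFt.add_const (C k)).congr' heq.symm
    have h2 := hψm k
    rw [← hTsucc k] at h2
    exact tendsto_nhds_unique h2 hcand
  -- values at grid points
  have hψT : ∀ k : ℕ, ψ (T k) = F (T k) + C k :=
    fun k => hψ_eq k (T k) ⟨le_rfl, hTlt k⟩
  have hψ0 : ψ 0 = 0 := by
    have := hψT 0
    rw [hT0] at this
    simp only [hC, Finset.range_zero, Finset.sum_empty, add_zero] at this
    rw [this, hF 0, intervalIntegral.integral_same]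
  -- piecewise integrands agree a.e.
  have hae : ∀ (k : ℕ) (a b : ℝ), T k ≤ a → a ≤ b → b ≤ T (k+1) →
      (fun s => f s * ψ s) =ᶠ[ae (volume.restrict (Set.uIoc a b))]
        (fun s => f s * (F s + C k)) := by
    intro k a b hka hab hbk
    have h1 : ∀ᵐ (s : ℝ) ∂(volume.restrict (Set.uIoc a b)), s ≠ T (k+1) :=
      ae_restrict_of_ae (by simp [ae_iff])
    filter_upwards [h1, ae_restrict_mem measurableSet_uIoc] with s hs hmem
    rw [Set.uIoc_of_le hab] at hmem
    have : s ∈ Set.Ico (T k) (T (k+1)) :=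
      ⟨le_trans hka hmem.1.le, lt_of_le_of_ne (le_trans hmem.2 hbk) hs⟩
    rw [hψ_eq k s this]
  -- integrability of the piecewise integrand
  have hint2 : ∀ (c a b : ℝ), 0 ≤ a → a ≤ b →
      IntervalIntegrable (fun s => f s * (F s + c)) volume a b := by
    intro c a b h0a hab
    have h0b : (0:ℝ) ≤ b := le_trans h0a hab
    have hI : IntervalIntegrable f volume a b := by
      refine (hf_int b h0b).mono_set ?_
      rw [Set.uIcc_of_le hab, Set.uIcc_of_le h0b]
      exact Set.Icc_subset_Icc h0a le_rfl
    refine hI.mul_continuousOn ?_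
    rw [Set.uIcc_of_le hab]
    exact ((aux_F_contOn f F hF b h0b (hf_int b h0b)).mono
      (Set.Icc_subset_Icc h0a le_rfl)).add continuousOn_const
  have hintψ : ∀ (k : ℕ) (a b : ℝ), T k ≤ a → a ≤ b → b ≤ T (k+1) →
      IntervalIntegrable (fun s => f s * ψ s) volume a b := by
    intro k a b hka hab hbk
    have h := hint2 (C k) a b (le_trans (hTnonneg k) hka) hab
    rw [intervalIntegrable_iff] at h ⊢
    exact h.congr (hae k a b hka hab hbk).symm
  -- per-piece identity
  have hpiece : ∀ (k : ℕ) (a b : ℝ), T k ≤ a → a ≤ b → b ≤ T (k+1) →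
      2 * (∫ s in a..b, f s * ψ s) = (F b + C k) ^ 2 - (F a + C k) ^ 2 := by
    intro k a b hka hab hbk
    have h0a : 0 ≤ a := le_trans (hTnonneg k) hka
    have hcongr : (∫ s in a..b, f s * ψ s) = ∫ s in a..b, f s * (F s + C k) :=
      intervalIntegral.integral_congr_ae
        (by
          have h1 : ∀ᵐ (s : ℝ) ∂volume, s ≠ T (k+1) := by simp [ae_iff]
          filter_upwards [h1] with s hs hmem
          rw [Set.uIoc_of_le hab] at hmem
          have : s ∈ Set.Ico (T k) (T (k+1)) :=
            ⟨le_trans hka hmem.1.le, lt_of_le_of_ne (le_trans hmem.2 hbk) hs⟩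
          rw [hψ_eq k s this])
    rw [hcongr]
    have hfc : ContinuousOn f (Set.Ioo a b) := by
      refine (hf_cont k).mono ?_
      rw [← hTsucc k]
      exact subset_trans Set.Ioo_subset_Ico_self (Set.Ico_subset_Ico hka hbk)
    exact (aux_ftc f F hF hf_int a b (C k) h0a hab hfc).symm
  -- main computation
  intro t ht
  set n := ⌊(N : ℝ) * t⌋₊ with hn
  have hTn_le : T n ≤ t := by
    have h1 : (n : ℝ) ≤ (N : ℝ) * t := Nat.floor_le (by positivity)
    simp only [hT]
    rw [div_le_iff₀ hN0]
    linarith [h1]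
  have ht_lt : t < T (n + 1) := by
    have h1 : (N : ℝ) * t < (n : ℝ) + 1 := Nat.lt_floor_add_one _
    rw [hTsucc n, lt_div_iff₀ hN0]
    linarith [h1]
  -- split the integral
  have hIpieces : ∀ k < n, IntervalIntegrable (fun s => f s * ψ s) volume (T k) (T (k+1)) :=
    fun k _ => hintψ k (T k) (T (k+1)) le_rfl (hTlt k).le le_rfl
  have hsum := intervalIntegral.sum_integral_adjacent_intervals
    (μ := volume) (f := fun s => f s * ψ s) (a := T) hIpieces
  have hI0n : IntervalIntegrable (fun s => f s * ψ s) volume (T 0) (T n) :=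
    IntervalIntegrable.trans_iterate hIpieces
  have hInt : IntervalIntegrable (fun s => f s * ψ s) volume (T n) t :=
    hintψ n (T n) t le_rfl hTn_le ht_lt.le
  have hsplit : (∫ s in (0:ℝ)..t, f s * ψ s) =
      (∑ k ∈ Finset.range n, ∫ s in (T k)..(T (k+1)), f s * ψ s) +
      ∫ s in (T n)..t, f s * ψ s := by
    rw [hsum]
    rw [intervalIntegral.integral_add_adjacent_intervals hI0n hInt, hT0]
  -- telescoping values
  have hu : ∀ k : ℕ, ψ (T (k+1)) = ψm k + α k := by
    intro k
    rw [hψT (k+1), hψm_val k, hC]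
    simp [Finset.sum_range_succ]
    ring
  have hIk : ∀ k : ℕ, 2 * (∫ s in (T k)..(T (k+1)), f s * ψ s)
      = ψm k ^ 2 - ψ (T k) ^ 2 := by
    intro k
    rw [hpiece k (T k) (T (k+1)) le_rfl (hTlt k).le le_rfl, ← hψm_val k, ← hψT k]
  have hJ : 2 * (∫ s in (T n)..t, f s * ψ s) = ψ t ^ 2 - ψ (T n) ^ 2 := by
    rw [hpiece n (T n) t le_rfl hTn_le ht_lt.le, ← hψT n]
    congr 1
    rw [hψ t, hg t, ← hn, hC]
  have htel : ∑ k ∈ Finset.range n, (ψ (T (k+1)) ^ 2 - ψ (T k) ^ 2)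
      = ψ (T n) ^ 2 - ψ (T 0) ^ 2 := Finset.sum_range_sub (fun k => ψ (T k) ^ 2) n
  -- final algebra
  have e1 : 2 * (∫ s in (0:ℝ)..t, f s * ψ s) =
      (∑ k ∈ Finset.range n, (ψm k ^ 2 - ψ (T k) ^ 2)) + (ψ t ^ 2 - ψ (T n) ^ 2) := by
    rw [hsplit, mul_add, Finset.mul_sum, hJ]
    congr 1
    exact Finset.sum_congr rfl fun k _ => hIk k
  have hfin : ∑ k ∈ Finset.range n, (ψm k ^ 2 - ψ (T k) ^ 2)
      + ∑ k ∈ Finset.range n, α k ^ 2 + ∑ k ∈ Finset.range n, 2 * (ψm k * α k)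
      = ψ (T n) ^ 2 := by
    rw [← Finset.sum_add_distrib, ← Finset.sum_add_distrib]
    have hcong : ∀ k ∈ Finset.range n, ψm k ^ 2 - ψ (T k) ^ 2 + α k ^ 2 + 2 * (ψm k * α k)
        = ψ (T (k+1)) ^ 2 - ψ (T k) ^ 2 := by
      intro k _
      rw [hu k]
      ring
    rw [Finset.sum_congr rfl hcong, htel, hT0, hψ0]
    ring
  rw [e1, Finset.mul_sum]
  linarith [hfin]
end

section
/- Let (φ¹_t) and (φ²_t) be the flows of two time-dependent vector fields v¹, v² on ℝ^d, each Lipschitz in space with constant L uniformly in time. Then for all probability measures μ, ν ∈ P₁(ℝ^d) and all t ≥ 0, W₁(φ¹_t # μ, φ²_t # ν) ≤ e^{Lt} W₁(μ, ν) + ((e^{Lt} − 1)/L) · sup_{0 ≤ s ≤ t} ‖v¹_s − v²_s‖_∞. -/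
open MeasureTheory

/-- The `1`-Wasserstein distance, defined as the infimum over couplings of the
expected distance. -/
noncomputable def W1 {E : Type*} [MeasurableSpace E] [PseudoMetricSpace E]
    (μ ν : Measure E) : ℝ :=
  sInf {r : ℝ | ∃ π : Measure (E × E), π.map Prod.fst = μ ∧ π.map Prod.snd = ν ∧
    r = ∫ z, dist z.1 z.2 ∂π}

/-- Pointwise Grönwall stability estimate between flows of two vector fields. -/
lemma flow_dist_aux (d : ℕ) (L : NNReal) (hL : 0 < (L : ℝ))
    (v₁ v₂ : ℝ → EuclideanSpace ℝ (Fin d) → EuclideanSpace ℝ (Fin d))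
    (hlip1 : ∀ t, LipschitzWith L (v₁ t))
    (φ₁ φ₂ : ℝ → EuclideanSpace ℝ (Fin d) → EuclideanSpace ℝ (Fin d))
    (hφ₁0 : ∀ x, φ₁ 0 x = x) (hφ₂0 : ∀ x, φ₂ 0 x = x)
    (hφ₁ : ∀ x t, HasDerivAt (fun s => φ₁ s x) (v₁ t (φ₁ t x)) t)
    (hφ₂ : ∀ x t, HasDerivAt (fun s => φ₂ s x) (v₂ t (φ₂ t x)) t)
    (t : ℝ) (ht : 0 ≤ t)
    (M : ℝ) (hM : ∀ s ∈ Set.Icc (0:ℝ) t, ∀ x, ‖v₁ s x - v₂ s x‖ ≤ M)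
    (x y : EuclideanSpace ℝ (Fin d)) :
    dist (φ₁ t x) (φ₂ t y) ≤ Real.exp ((L:ℝ)*t) * dist x y
      + (Real.exp ((L:ℝ)*t) - 1) / (L:ℝ) * M := by
  have hLne : (L : ℝ) ≠ 0 := ne_of_gt hL
  have h := dist_le_of_approx_trajectories_ODE (v := v₁) (K := L) hlip1
    (f := fun s => φ₁ s x) (f' := fun s => v₁ s (φ₁ s x))
    (g := fun s => φ₂ s y) (g' := fun s => v₂ s (φ₂ s y))
    (a := 0) (b := t) (εf := 0) (εg := M) (δ := dist x y)
    (fun s _ => (hφ₁ x s).continuousAt.continuousWithinAt)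
    (fun s hs => (hφ₁ x s).hasDerivWithinAt)
    (fun s _ => by simp)
    (fun s _ => (hφ₂ y s).continuousAt.continuousWithinAt)
    (fun s hs => (hφ₂ y s).hasDerivWithinAt)
    (fun s hs => by
      rw [dist_eq_norm, norm_sub_rev]
      exact hM s (Set.mem_Icc.2 ⟨hs.1, le_of_lt hs.2⟩) _)
    (by simp only [hφ₁0, hφ₂0, le_refl])
  have h2 := h t (Set.mem_Icc.2 ⟨ht, le_refl t⟩)
  rw [gronwallBound_of_K_ne_0 hLne] at h2
  simp only [zero_add, sub_zero] at h2
  calc dist (φ₁ t x) (φ₂ t y)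
      ≤ dist x y * Real.exp ((L:ℝ) * t) + M / (L:ℝ) * (Real.exp ((L:ℝ) * t) - 1) := h2
    _ = _ := by ring

/-- Stability of flows of Lipschitz vector fields in Wasserstein distance: if `φ¹, φ²` are the
flows of `v¹, v²` (Lipschitz in space with constant `L` uniformly in time), then for every
uniform bound `M` on `‖v¹_s − v²_s‖_∞` over `s ∈ [0,t]`,
`W₁(φ¹_t#μ, φ²_t#ν) ≤ e^{Lt} W₁(μ,ν) + ((e^{Lt} − 1)/L) M`. -/
theorem flow_wasserstein_stability (d : ℕ) (L : NNReal) (hL : 0 < (L : ℝ))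
    (v₁ v₂ : ℝ → EuclideanSpace ℝ (Fin d) → EuclideanSpace ℝ (Fin d))
    (hv₁cont : Continuous fun p : ℝ × EuclideanSpace ℝ (Fin d) => v₁ p.1 p.2)
    (hv₂cont : Continuous fun p : ℝ × EuclideanSpace ℝ (Fin d) => v₂ p.1 p.2)
    (hlip1 : ∀ t, LipschitzWith L (v₁ t)) (hlip2 : ∀ t, LipschitzWith L (v₂ t))
    (φ₁ φ₂ : ℝ → EuclideanSpace ℝ (Fin d) → EuclideanSpace ℝ (Fin d))
    (hφ₁0 : ∀ x, φ₁ 0 x = x) (hφ₂0 : ∀ x, φ₂ 0 x = x)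
    (hφ₁ : ∀ x t, HasDerivAt (fun s => φ₁ s x) (v₁ t (φ₁ t x)) t)
    (hφ₂ : ∀ x t, HasDerivAt (fun s => φ₂ s x) (v₂ t (φ₂ t x)) t)
    (μ ν : Measure (EuclideanSpace ℝ (Fin d)))
    [IsProbabilityMeasure μ] [IsProbabilityMeasure ν]
    (hμ : ∫⁻ x, ENNReal.ofReal ‖x‖ ∂μ < ⊤) (hν : ∫⁻ x, ENNReal.ofReal ‖x‖ ∂ν < ⊤)
    (t : ℝ) (ht : 0 ≤ t)
    (M : ℝ) (hM : ∀ s ∈ Set.Icc (0:ℝ) t, ∀ x, ‖v₁ s x - v₂ s x‖ ≤ M) :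
    W1 (μ.map (φ₁ t)) (ν.map (φ₂ t)) ≤
      Real.exp ((L : ℝ) * t) * W1 μ ν + (Real.exp ((L : ℝ) * t) - 1) / (L : ℝ) * M := by
  classical
  set e := Real.exp ((L : ℝ) * t) with he
  have hepos : 0 < e := Real.exp_pos _
  set C := (e - 1) / (L : ℝ) * M with hC
  -- pointwise estimate
  have key : ∀ x y, dist (φ₁ t x) (φ₂ t y) ≤ e * dist x y + C :=
    flow_dist_aux d L hL v₁ v₂ hlip1 φ₁ φ₂ hφ₁0 hφ₂0 hφ₁ hφ₂ t ht M hM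
  -- the flow maps are Lipschitz, hence continuous
  have hcont1 : Continuous (φ₁ t) := by
    have hlipφ : LipschitzWith e.toNNReal (φ₁ t) := by
      apply LipschitzWith.of_dist_le_mul
      intro x y
      have := flow_dist_aux d L hL v₁ v₁ hlip1 φ₁ φ₁ hφ₁0 hφ₁0 hφ₁ hφ₁ t ht 0
        (fun s _ x => by simp) x y
      rw [Real.coe_toNNReal e (le_of_lt hepos)]
      simpa using this
    exact hlipφ.continuous
  have hcont2 : Continuous (φ₂ t) := by
    have hlipφ : LipschitzWith e.toNNReal (φ₂ t) := by
      apply LipschitzWith.of_dist_le_mul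
      intro x y
      have := flow_dist_aux d L hL v₂ v₂ hlip2 φ₂ φ₂ hφ₂0 hφ₂0 hφ₂ hφ₂ t ht 0
        (fun s _ x => by simp) x y
      rw [Real.coe_toNNReal e (le_of_lt hepos)]
      simpa using this
    exact hlipφ.continuous
  -- first moments
  have hμint : Integrable (fun x => ‖x‖) μ := by
    refine ⟨continuous_norm.aestronglyMeasurable, ?_⟩
    simpa [HasFiniteIntegral, ← ofReal_norm] using hμ
  have hνint : Integrable (fun x => ‖x‖) ν := by
    refine ⟨continuous_norm.aestronglyMeasurable, ?_⟩
    simpa [HasFiniteIntegral, ← ofReal_norm] using hν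
  set S := {r : ℝ | ∃ π : Measure (EuclideanSpace ℝ (Fin d) × EuclideanSpace ℝ (Fin d)),
    π.map Prod.fst = μ ∧ π.map Prod.snd = ν ∧ r = ∫ z, dist z.1 z.2 ∂π} with hS
  have hbdd : ∀ (μ' ν' : Measure (EuclideanSpace ℝ (Fin d))), BddBelow {r : ℝ |
      ∃ π : Measure (EuclideanSpace ℝ (Fin d) × EuclideanSpace ℝ (Fin d)),
      π.map Prod.fst = μ' ∧ π.map Prod.snd = ν' ∧ r = ∫ z, dist z.1 z.2 ∂π} := by
    intro μ' ν'
    refine ⟨0, ?_⟩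
    rintro r ⟨π, -, -, rfl⟩
    exact integral_nonneg fun z => dist_nonneg
  -- step A : for every coupling of μ, ν the pushforward coupling gives the bound
  have claimA : ∀ r ∈ S, W1 (μ.map (φ₁ t)) (ν.map (φ₂ t)) ≤ e * r + C := by
    rintro r ⟨π, hπ1, hπ2, rfl⟩
    have hπprob : IsProbabilityMeasure π := by
      constructor
      have h1 := congrArg (fun m : Measure (EuclideanSpace ℝ (Fin d)) => m Set.univ) hπ1
      simpa [Measure.map_apply measurable_fst MeasurableSet.univ] using h1
    -- integrability of the distance w.r.t. π
    have hi1 : Integrable (fun z : _ × _ => ‖z.1‖) π := by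
      have h : Integrable (fun x => ‖x‖) (π.map Prod.fst) := hπ1 ▸ hμint
      exact (integrable_map_measure (g := fun x => ‖x‖) (f := Prod.fst)
        (hπ1 ▸ hμint.aestronglyMeasurable) measurable_fst.aemeasurable).mp h
    have hi2 : Integrable (fun z : _ × _ => ‖z.2‖) π := by
      have h : Integrable (fun x => ‖x‖) (π.map Prod.snd) := hπ2 ▸ hνint
      exact (integrable_map_measure (g := fun x => ‖x‖) (f := Prod.snd)
        (hπ2 ▸ hνint.aestronglyMeasurable) measurable_snd.aemeasurable).mp h
    have hidist : Integrable (fun z : _ × _ => dist z.1 z.2) π := by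
      refine (hi1.add hi2).mono' (continuous_fst.dist continuous_snd).aestronglyMeasurable ?_
      filter_upwards with z
      rw [Real.norm_eq_abs, abs_of_nonneg dist_nonneg]
      exact dist_le_norm_add_norm z.1 z.2
    have hibound : Integrable (fun z : _ × _ => e * dist z.1 z.2 + C) π :=
      (hidist.const_mul e).add (integrable_const C)
    have hiφ : Integrable (fun z : _ × _ => dist (φ₁ t z.1) (φ₂ t z.2)) π := by
      refine hibound.mono' ((hcont1.comp continuous_fst).dist
        (hcont2.comp continuous_snd)).aestronglyMeasurable ?_
      filter_upwards with z
      rw [Real.norm_eq_abs, abs_of_nonneg dist_nonneg]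
      exact key z.1 z.2
    -- the pushforward coupling
    set Φ : EuclideanSpace ℝ (Fin d) × EuclideanSpace ℝ (Fin d) →
        EuclideanSpace ℝ (Fin d) × EuclideanSpace ℝ (Fin d) :=
      Prod.map (φ₁ t) (φ₂ t) with hΦ
    have hΦm : Measurable Φ := ((hcont1.comp continuous_fst).prodMk
      (hcont2.comp continuous_snd)).measurable
    set π' := π.map Φ with hπ'
    have hπ'1 : π'.map Prod.fst = μ.map (φ₁ t) := by
      rw [hπ', Measure.map_map measurable_fst hΦm]
      have : Prod.fst ∘ Φ = (φ₁ t) ∘ Prod.fst := rfl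
      rw [this, ← Measure.map_map hcont1.measurable measurable_fst, hπ1]
    have hπ'2 : π'.map Prod.snd = ν.map (φ₂ t) := by
      rw [hπ', Measure.map_map measurable_snd hΦm]
      have : Prod.snd ∘ Φ = (φ₂ t) ∘ Prod.snd := rfl
      rw [this, ← Measure.map_map hcont2.measurable measurable_snd, hπ2]
    have hint_eq : ∫ z, dist z.1 z.2 ∂π' = ∫ z, dist (φ₁ t z.1) (φ₂ t z.2) ∂π := by
      rw [hπ', integral_map hΦm.aemeasurable
        (continuous_fst.dist continuous_snd).aestronglyMeasurable]
      rfl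
    have hW'le : W1 (μ.map (φ₁ t)) (ν.map (φ₂ t)) ≤ ∫ z, dist z.1 z.2 ∂π' :=
      csInf_le (hbdd _ _) ⟨π', hπ'1, hπ'2, rfl⟩
    refine hW'le.trans ?_
    rw [hint_eq]
    calc ∫ z, dist (φ₁ t z.1) (φ₂ t z.2) ∂π
        ≤ ∫ z : _ × _, (e * dist z.1 z.2 + C) ∂π :=
          integral_mono hiφ hibound fun z => key z.1 z.2
      _ = e * ∫ z, dist z.1 z.2 ∂π + C := by
          rw [integral_add (hidist.const_mul e) (integrable_const C),
            integral_const_mul, integral_const]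
          simp
  -- step B : nonemptiness of the set of couplings
  have hSne : S.Nonempty := by
    refine ⟨∫ z, dist z.1 z.2 ∂(μ.prod ν), μ.prod ν, ?_, ?_, rfl⟩
    · simp [Measure.map_fst_prod]
    · simp [Measure.map_snd_prod]
  -- conclude
  have hdiv : ∀ r ∈ S, (W1 (μ.map (φ₁ t)) (ν.map (φ₂ t)) - C) / e ≤ r := by
    intro r hr
    rw [div_le_iff₀ hepos]
    have := claimA r hr
    nlinarith
  have hfin : (W1 (μ.map (φ₁ t)) (ν.map (φ₂ t)) - C) / e ≤ W1 μ ν := le_csInf hSne hdiv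
  rw [div_le_iff₀ hepos] at hfin
  nlinarith
end
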